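/- Universal copy constructor: let G be a finite connected directed graph in which every edge is bidirectional, let X₀ be a vertex of G, and let G₀ = s_{X₀}(G) be the result of applying the splitFork action at X₀. For t ≥ 1 let G_t be obtained from G_{t−1} by applying the splitFork action s_X simultaneously at every vertex X of G_{t−1} that carries a fork. Then every G_t is well defined (the simultaneous applications at distinct vertices are compatible), the sequence (G_t) is eventually constant, and the eventual graph is the disjoint union of two connected directed graphs, each of which is isomorphic to G as a directed graph. -/

import Mathlib

namespace SplitFork

/-- A state: a directed graph, given by a type of vertices together with an edge
relation (edge set `E ⊆ V × V`, loops allowed). -/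
structure DiGraph : Type (u + 1) where
  V : Type u
  E : V → V → Prop

/-- A fork at a vertex `X`: a pair consisting of a unidirectional edge with target `X`
and a unidirectional edge with source `X`. -/
def DiGraph.HasFork (G : DiGraph) (X : G.V) : Prop :=
  (∃ y, G.E y X ∧ ¬G.E X y) ∧ (∃ y, G.E X y ∧ ¬G.E y X)

/-- An isomorphism of directed graphs: a bijection of the vertices preserving and
reflecting the edge relation. -/
structure Iso (G H : DiGraph) where
  toEquiv : G.V ≃ H.V
  edge_iff : ∀ a b : G.V, G.E a b ↔ H.E (toEquiv a) (toEquiv b)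

/-- The disjoint union of two directed graphs (no edges between the two parts). -/
def disjUnion (G H : DiGraph) : DiGraph where
  V := G.V ⊕ H.V
  E := fun u v =>
    (∃ a b, G.E a b ∧ u = Sum.inl a ∧ v = Sum.inl b) ∨
    (∃ a b, H.E a b ∧ u = Sum.inr a ∧ v = Sum.inr b)

open Classical in
/-- The new source of a non-loop edge `(a, b)` under the splitFork action at `X`
(the fresh copy `X′` is `Sum.inr ⟨⟩`): a unidirectional edge with source `X` gets the
copy `X′` as its source; all other edges retain their source. -/
noncomputable def newSrc (G : DiGraph.{u}) (X a b : G.V) : G.V ⊕ PUnit.{u + 1} :=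
  if a = X ∧ ¬G.E b a then Sum.inr ⟨⟩ else Sum.inl a

open Classical in
/-- The new target of a non-loop edge `(a, b)` under the splitFork action at `X`:
a bidirectional edge with target `X` gets the copy `X′` as its target; all other
edges retain their target. -/
noncomputable def newTgt (G : DiGraph.{u}) (X a b : G.V) : G.V ⊕ PUnit.{u + 1} :=
  if b = X ∧ G.E b a then Sum.inr ⟨⟩ else Sum.inl b

/-- The splitFork action `s_X` at the vertex `X`: (1) a fresh copy `X′` of `X` is
added; (2) each non-loop edge is redistributed: a bidirectional edge with target `X`
gets `X′` as its target, a unidirectional edge with target `X` keeps `X`, a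
bidirectional edge with source `X` keeps `X`, a unidirectional edge with source `X`
gets `X′` as its source; loops at `X` are retained and copied at `X′`, all other
edges are unchanged; (3) the adjoint of each formerly unidirectional edge incident to
`X` is added as an edge. -/
noncomputable def splitOne (G : DiGraph.{u}) (X : G.V) : DiGraph.{u} where
  V := G.V ⊕ PUnit.{u + 1}
  E := fun u v =>
    ∃ a b, G.E a b ∧
      ((a ≠ b ∧
          ((u = newSrc G X a b ∧ v = newTgt G X a b) ∨
            (¬G.E b a ∧ (a = X ∨ b = X) ∧ u = newTgt G X a b ∧ v = newSrc G X a b))) ∨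
        (a = b ∧
          ((u = Sum.inl a ∧ v = Sum.inl a) ∨
            (a = X ∧ u = Sum.inr ⟨⟩ ∧ v = Sum.inr ⟨⟩))))

/-- Sequential application of the splitFork action at a list of (original) vertices. -/
noncomputable def seqSplit : (G : DiGraph.{u}) → List G.V → DiGraph.{u}
  | G, [] => G
  | G, x :: xs => seqSplit (splitOne G x) (xs.map Sum.inl)
  termination_by G l => l.length
  decreasing_by simp [List.length_map]; exact (List.length_map ..).le

/-- `H` is obtained from `G` by applying the splitFork action (in some order)
at every vertex of `G` that carries a fork. -/
def Step (G H : DiGraph.{u}) : Prop :=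
  ∃ l : List G.V, l.Nodup ∧ (∀ x : G.V, x ∈ l ↔ G.HasFork x) ∧ H = seqSplit G l

universe u
variable {G₁ G₂ : DiGraph.{u}}

@[simps] def Iso.refl (G : DiGraph) : Iso G G := ⟨Equiv.refl _, fun _ _ => Iff.rfl⟩

@[simps] def Iso.symm (i : Iso G₁ G₂) : Iso G₂ G₁ :=
  ⟨i.toEquiv.symm, fun a b => by
    conv_lhs => rw [← i.toEquiv.apply_symm_apply a, ← i.toEquiv.apply_symm_apply b,
      ← i.edge_iff]⟩

@[simps] def Iso.trans {G₃ : DiGraph} (i : Iso G₁ G₂) (j : Iso G₂ G₃) : Iso G₁ G₃ :=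
  ⟨i.toEquiv.trans j.toEquiv, fun a b => (i.edge_iff a b).trans (j.edge_iff _ _)⟩

/-- induced map on the split graphs -/
noncomputable def splitMap (i : Iso G₁ G₂) :
    (G₁.V ⊕ PUnit.{u+1}) ≃ (G₂.V ⊕ PUnit.{u+1}) :=
  Equiv.sumCongr i.toEquiv (Equiv.refl _)

lemma splitMap_newSrc (i : Iso G₁ G₂) (X a b : G₁.V) :
    splitMap i (newSrc G₁ X a b) = newSrc G₂ (i.toEquiv X) (i.toEquiv a) (i.toEquiv b) := by
  unfold newSrc
  by_cases h : a = X ∧ ¬G₁.E b a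
  · rw [if_pos h, if_pos ⟨by rw [h.1], by rw [← i.edge_iff]; exact h.2⟩]; rfl
  · rw [if_neg h, if_neg (by
      rintro ⟨h1, h2⟩
      exact h ⟨i.toEquiv.injective h1, by rw [i.edge_iff b a]; exact h2⟩)]
    rfl

lemma splitMap_newTgt (i : Iso G₁ G₂) (X a b : G₁.V) :
    splitMap i (newTgt G₁ X a b) = newTgt G₂ (i.toEquiv X) (i.toEquiv a) (i.toEquiv b) := by
  unfold newTgt
  by_cases h : b = X ∧ G₁.E b a
  · rw [if_pos h, if_pos ⟨by rw [h.1], by rw [← i.edge_iff]; exact h.2⟩]; rfl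
  · rw [if_neg h, if_neg (by
      rintro ⟨h1, h2⟩
      exact h ⟨i.toEquiv.injective h1, by rw [i.edge_iff b a]; exact h2⟩)]
    rfl

lemma splitOne_map_edge (i : Iso G₁ G₂) (X : G₁.V) (u v : G₁.V ⊕ PUnit.{u+1})
    (h : (splitOne G₁ X).E u v) :
    (splitOne G₂ (i.toEquiv X)).E (splitMap i u) (splitMap i v) := by
  obtain ⟨a, b, hab, h⟩ := h
  refine ⟨i.toEquiv a, i.toEquiv b, (i.edge_iff a b).1 hab, ?_⟩
  rcases h with ⟨hne, h | h⟩ | ⟨heq, h | h⟩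
  · exact Or.inl ⟨fun hc => hne (i.toEquiv.injective hc),
      Or.inl ⟨by rw [h.1, splitMap_newSrc], by rw [h.2, splitMap_newTgt]⟩⟩
  · refine Or.inl ⟨fun hc => hne (i.toEquiv.injective hc), Or.inr
      ⟨by rw [← i.edge_iff]; exact h.1, ?_,
        by rw [h.2.2.1, splitMap_newTgt], by rw [h.2.2.2, splitMap_newSrc]⟩⟩
    rcases h.2.1 with h' | h'
    · exact Or.inl (by rw [h'])
    · exact Or.inr (by rw [h'])
  · exact Or.inr ⟨by rw [heq], Or.inl ⟨by rw [h.1]; rfl, by rw [h.2, heq]; rfl⟩⟩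
  · exact Or.inr ⟨by rw [heq], Or.inr ⟨by rw [h.1], by rw [h.2.1]; rfl, by rw [h.2.2]; rfl⟩⟩

/-- splitOne transports along isos -/
noncomputable def splitOneIso (i : Iso G₁ G₂) (X : G₁.V) :
    Iso (splitOne G₁ X) (splitOne G₂ (i.toEquiv X)) where
  toEquiv := splitMap i
  edge_iff := fun u v => ⟨splitOne_map_edge i X u v, fun h => by
    have := splitOne_map_edge i.symm (i.toEquiv X) _ _ h
    have e1 : i.symm.toEquiv (i.toEquiv X) = X := i.toEquiv.symm_apply_apply X
    rw [e1] at this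
    have e2 : ∀ w, splitMap i.symm (splitMap i w) = w := by
      intro w; rcases w with a | pu
      · exact congrArg Sum.inl (i.toEquiv.symm_apply_apply a)
      · rfl
    exact (e2 u) ▸ (e2 v) ▸ this⟩



@[simp] lemma splitOneIso_apply_inl (i : Iso G₁ G₂) (X : G₁.V) (a : G₁.V) :
    (splitOneIso i X).toEquiv (Sum.inl a) = Sum.inl (i.toEquiv a) := rfl

@[simp] lemma splitOneIso_apply_inr (i : Iso G₁ G₂) (X : G₁.V) (p : PUnit.{u+1}) :
    (splitOneIso i X).toEquiv (Sum.inr p) = Sum.inr p := rfl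
lemma seqSplit_nil (G : DiGraph.{u}) : seqSplit G [] = G := by rw [seqSplit]

lemma seqSplit_cons (G : DiGraph.{u}) (x : G.V) (xs : List G.V) :
    seqSplit G (x :: xs) = seqSplit (splitOne G x) (xs.map Sum.inl) := by rw [seqSplit]

/-- transport of seqSplit along isos -/
lemma seqSplit_iso : ∀ (n : ℕ) (G₁ G₂ : DiGraph.{u}) (i : Iso G₁ G₂) (l : List G₁.V),
    l.length = n → Nonempty (Iso (seqSplit G₁ l) (seqSplit G₂ (l.map i.toEquiv)))
  | 0, G₁, G₂, i, l, hl => by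
      rw [List.length_eq_zero_iff] at hl; subst hl
      rw [List.map_nil, seqSplit_nil, seqSplit_nil]; exact ⟨i⟩
  | (n+1), G₁, G₂, i, l, hl => by
      rcases l with _ | ⟨x, xs⟩
      · simp at hl
      · rw [List.map_cons, seqSplit_cons, seqSplit_cons]
        have key := seqSplit_iso n _ _ (splitOneIso i x) (xs.map Sum.inl)
          ((List.length_map ..).trans (by simpa using Nat.succ_injective hl))
        have hmap : (xs.map (Sum.inl : G₁.V → (splitOne G₁ x).V)).map (splitOneIso i x).toEquiv =
            (xs.map i.toEquiv).map (Sum.inl : G₂.V → (splitOne G₂ (i.toEquiv x)).V) := by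
          clear key hl
          induction xs with
          | nil => rfl
          | cons a as ih => exact congrArg (List.cons _) ih
        exact hmap ▸ key
/-- The partially replicated graph over a set `S`. -/
def Rel (G : DiGraph.{u}) (S : Set G.V) : (G.V ⊕ ↥S) → (G.V ⊕ ↥S) → Prop
  | Sum.inl a, Sum.inl b => G.E a b ∧ (b ∈ S → a ∈ S)
  | Sum.inl a, Sum.inr s => G.E a ↑s ∧ a ∉ S
  | Sum.inr _, Sum.inl _ => False
  | Sum.inr s, Sum.inr t => G.E ↑s ↑t

@[reducible] def RG (G : DiGraph.{u}) (S : Set G.V) : DiGraph.{u} := ⟨G.V ⊕ ↥S, Rel G S⟩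

@[simp] lemma RG_E (G : DiGraph.{u}) (S : Set G.V) : (RG G S).E = Rel G S := rfl

@[simp] lemma Rel_inl_inl {G : DiGraph.{u}} {S : Set G.V} {a b : G.V} :
    Rel G S (Sum.inl a) (Sum.inl b) ↔ G.E a b ∧ (b ∈ S → a ∈ S) := Iff.rfl
@[simp] lemma Rel_inl_inr {G : DiGraph.{u}} {S : Set G.V} {a : G.V} {s : ↥S} :
    Rel G S (Sum.inl a) (Sum.inr s) ↔ G.E a ↑s ∧ a ∉ S := Iff.rfl
@[simp] lemma Rel_inr_inl {G : DiGraph.{u}} {S : Set G.V} {s : ↥S} {b : G.V} :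
    Rel G S (Sum.inr s) (Sum.inl b) ↔ False := Iff.rfl
@[simp] lemma Rel_inr_inr {G : DiGraph.{u}} {S : Set G.V} {s t : ↥S} :
    Rel G S (Sum.inr s) (Sum.inr t) ↔ G.E ↑s ↑t := Iff.rfl

/-- boundary of a set -/
def bdry (G : DiGraph.{u}) (S : Set G.V) : Set G.V := {w | w ∉ S ∧ ∃ s ∈ S, G.E s w}

/-- forks transport along isos -/
lemma hasFork_map {G₁ G₂ : DiGraph.{u}} (i : Iso G₁ G₂) (x : G₁.V) (h : G₁.HasFork x) :
    G₂.HasFork (i.toEquiv x) := by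
  obtain ⟨⟨y1, h1, h2⟩, ⟨y2, h3, h4⟩⟩ := h
  exact ⟨⟨i.toEquiv y1, (i.edge_iff _ _).1 h1, fun hc => h2 ((i.edge_iff _ _).2 hc)⟩,
    ⟨i.toEquiv y2, (i.edge_iff _ _).1 h3, fun hc => h4 ((i.edge_iff _ _).2 hc)⟩⟩

lemma hasFork_iff_map {G₁ G₂ : DiGraph.{u}} (i : Iso G₁ G₂) (x : G₁.V) :
    G₁.HasFork x ↔ G₂.HasFork (i.toEquiv x) := by
  refine ⟨hasFork_map i x, fun h => ?_⟩
  have := hasFork_map i.symm _ h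
  rwa [Iso.symm_toEquiv, i.toEquiv.symm_apply_apply] at this

/-- characterization of forks in the partially replicated graph -/
lemma hasFork_RG {G : DiGraph.{u}} (hbi : ∀ a b : G.V, G.E a b → G.E b a)
    (S : Set G.V) (v : (RG G S).V) :
    (RG G S).HasFork v ↔ ∃ z, v = Sum.inl z ∧ z ∈ bdry G S := by
  constructor
  · rintro ⟨⟨y, h1, h2⟩, ⟨w, h3, h4⟩⟩
    rcases v with z | ⟨s, hs⟩
    · rcases y with b | ⟨s, hs⟩
      · obtain ⟨hbz, -⟩ := h1
        have hzb : G.E z b := hbi _ _ hbz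
        by_cases hbS : b ∈ S
        · by_cases hzS : z ∈ S
          · exact (h2 ⟨hzb, fun _ => hzS⟩).elim
          · exact ⟨z, rfl, hzS, b, hbS, hbz⟩
        · exact (h2 ⟨hzb, fun h => absurd h hbS⟩).elim
      · simp at h1
    · rcases w with b | ⟨t, ht⟩
      · simp at h3
      · exact (h4 (by
          simp only [RG_E, Rel_inr_inr] at h3 ⊢
          exact hbi _ _ h3)).elim
  · rintro ⟨z, rfl, hzS, s, hsS, hsz⟩
    refine ⟨⟨Sum.inl s, ⟨hsz, fun _ => hsS⟩, ?_⟩,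
      ⟨Sum.inr ⟨s, hsS⟩, ⟨hbi _ _ hsz, hzS⟩, by intro h; simp at h⟩⟩
    rintro ⟨-, h⟩
    exact hzS (h hsS)

lemma RG_congr {G : DiGraph.{u}} {S S' : Set G.V} (h : S = S') :
    Nonempty (Iso (RG G S) (RG G S')) := by subst h; exact ⟨Iso.refl _⟩

/-- `G` is isomorphic to its replication over the empty set -/
noncomputable def isoRGEmpty (G : DiGraph.{u}) : Iso G (RG G (∅ : Set G.V)) where
  toEquiv := (Equiv.sumEmpty G.V ↥(∅ : Set G.V)).symm
  edge_iff := fun a b => by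
    simp [Equiv.sumEmpty, RG, Rel]

@[simp] lemma isoRGEmpty_apply (G : DiGraph.{u}) (a : G.V) :
    (isoRGEmpty G).toEquiv a = Sum.inl a := rfl
section SplitR
variable {G : DiGraph.{u}} {S : Set G.V} {z : G.V}

noncomputable def insEquiv (hz : z ∉ S) :
    ((G.V ⊕ ↥S) ⊕ PUnit.{u+1}) ≃ (G.V ⊕ ↥(insert z S)) :=
  letI := Classical.decPred (· ∈ S)
  (Equiv.sumAssoc G.V ↥S PUnit.{u+1}).trans
    (Equiv.sumCongr (Equiv.refl G.V) (Equiv.Set.insert hz).symm)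

@[simp] lemma insEquiv_l_l (hz : z ∉ S) (a : G.V) :
    insEquiv hz (Sum.inl (Sum.inl a)) = Sum.inl a := rfl
@[simp] lemma insEquiv_l_r (hz : z ∉ S) (s : ↥S) :
    insEquiv hz (Sum.inl (Sum.inr s)) = Sum.inr ⟨↑s, Or.inr s.2⟩ := rfl
@[simp] lemma insEquiv_r (hz : z ∉ S) (p : PUnit.{u+1}) :
    insEquiv hz (Sum.inr p) = Sum.inr ⟨z, Or.inl rfl⟩ := rfl

lemma ns_ll (hbi : ∀ a b : G.V, G.E a b → G.E b a) (hz : z ∉ S) {p q : G.V} (hpq : G.E p q) :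
    newSrc (RG G S) (Sum.inl z) (Sum.inl p) (Sum.inl q) = Sum.inl (Sum.inl p) :=
  if_neg (by
    rintro ⟨hp, hn⟩
    injection hp with hp; subst hp
    exact hn ⟨hbi _ _ hpq, fun h => absurd h hz⟩)

lemma nt_ll_pos (hbi : ∀ a b : G.V, G.E a b → G.E b a) {p q : G.V} (hq : q = z) (hp : p ∉ S) (hpq : G.E p q) :
    newTgt (RG G S) (Sum.inl z) (Sum.inl p) (Sum.inl q) = Sum.inr ⟨⟩ :=
  if_pos ⟨by rw [hq], ⟨hbi _ _ hpq, fun h => absurd h hp⟩⟩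

lemma nt_ll_neg (hz : z ∉ S) {p q : G.V} (hc : ¬(q = z ∧ p ∉ S)) :
    newTgt (RG G S) (Sum.inl z) (Sum.inl p) (Sum.inl q) = Sum.inl (Sum.inl q) :=
  if_neg (by
    rintro ⟨hq, hrel⟩
    injection hq with hq; subst hq
    have hp : p ∈ S := by by_contra hp; exact hc ⟨rfl, hp⟩
    exact hz (hrel.2 hp))

lemma ns_lr_pos {p : G.V} {t : ↥S} (hp : p = z) :
    newSrc (RG G S) (Sum.inl z) (Sum.inl p) (Sum.inr t) = Sum.inr ⟨⟩ :=
  if_pos ⟨by rw [hp], fun hf => hf⟩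

lemma ns_lr_neg {p : G.V} {t : ↥S} (hp : p ≠ z) :
    newSrc (RG G S) (Sum.inl z) (Sum.inl p) (Sum.inr t) = Sum.inl (Sum.inl p) :=
  if_neg (by rintro ⟨hp', -⟩; injection hp' with hp'; exact hp hp')

lemma nt_lr {t : ↥S} (a : (RG G S).V) :
    newTgt (RG G S) (Sum.inl z) a (Sum.inr t) = Sum.inl (Sum.inr t) :=
  if_neg (by rintro ⟨h, -⟩; cases h)

lemma ns_r {s : ↥S} (b : (RG G S).V) :
    newSrc (RG G S) (Sum.inl z) (Sum.inr s) b = Sum.inl (Sum.inr s) :=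
  if_neg (by rintro ⟨h, -⟩; cases h)

lemma splitR_fwd (hbi : ∀ a b : G.V, G.E a b → G.E b a) (hz : z ∉ S) (u v : ((RG G S).V ⊕ PUnit.{u+1}))
    (h : (splitOne (RG G S) (Sum.inl z)).E u v) :
    Rel G (insert z S) (insEquiv hz u) (insEquiv hz v) := by
  obtain ⟨a, b, hab, h⟩ := h
  rcases a with p | ⟨s, hs⟩ <;> rcases b with q | ⟨t, ht⟩
  · -- inl p, inl q
    obtain ⟨hpq, himp⟩ := hab
    rcases h with ⟨hne, ⟨hu, hv⟩ | ⟨hbid, hX, hu, hv⟩⟩ | ⟨heq, ⟨hu, hv⟩ | ⟨haX, hu, hv⟩⟩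
    · rw [ns_ll hbi hz hpq] at hu
      by_cases hc : q = z ∧ p ∉ S
      · rw [nt_ll_pos hbi hc.1 hc.2 hpq] at hv
        subst hu hv
        simp only [insEquiv_l_l, insEquiv_r, Rel_inl_inr]
        refine ⟨?_, ?_⟩
        · show G.E p z
          rw [← hc.1]; exact hpq
        rw [Set.mem_insert_iff]
        rintro (rfl | hp)
        · exact hne (by rw [hc.1])
        · exact hc.2 hp
      · rw [nt_ll_neg hz hc] at hv
        subst hu hv
        simp only [insEquiv_l_l, Rel_inl_inl]
        refine ⟨hpq, ?_⟩
        rw [Set.mem_insert_iff, Set.mem_insert_iff]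
        rintro (rfl | hqS)
        · right; by_contra hp; exact hc ⟨rfl, hp⟩
        · right; exact himp hqS
    · have h1 : ¬(p ∈ S → q ∈ S) := fun himp2 => hbid ⟨hbi _ _ hpq, himp2⟩
      push_neg at h1
      have hqz : q = z := by
        rcases hX with hx | hx
        · injection hx with hx; exact absurd (hx ▸ h1.1) hz
        · injection hx with hx
      rw [nt_ll_neg hz (fun hcc => hcc.2 h1.1)] at hu
      rw [ns_ll hbi hz hpq] at hv
      subst hu hv
      simp only [insEquiv_l_l, Rel_inl_inl]
      exact ⟨hbi _ _ hpq, fun _ => by rw [hqz]; exact Set.mem_insert _ _⟩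
    · injection heq with heq; subst heq; subst hu hv
      simp only [insEquiv_l_l, Rel_inl_inl]
      exact ⟨hpq, fun h => h⟩
    · injection heq with heq; injection haX with haX
      subst heq haX; subst hu hv
      simp only [insEquiv_r, Rel_inr_inr]
      exact hpq
  · -- inl p, inr t
    obtain ⟨hpt, hpS⟩ := hab
    rcases h with ⟨hne, ⟨hu, hv⟩ | ⟨hbid, hX, hu, hv⟩⟩ | ⟨heq, -⟩
    · rw [nt_lr] at hv; subst hv
      by_cases hp : p = z
      · rw [ns_lr_pos hp] at hu; subst hu
        simp only [insEquiv_r, insEquiv_l_r, Rel_inr_inr]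
        exact hp ▸ hpt
      · rw [ns_lr_neg hp] at hu; subst hu
        simp only [insEquiv_l_l, insEquiv_l_r, Rel_inl_inr]
        refine ⟨hpt, ?_⟩
        rw [Set.mem_insert_iff]
        rintro (rfl | hp2)
        · exact hp rfl
        · exact hpS hp2
    · have hp : p = z := by
        rcases hX with hx | hx
        · injection hx with hx
        · cases hx
      rw [nt_lr] at hu; rw [ns_lr_pos hp] at hv
      subst hu hv
      simp only [insEquiv_l_r, insEquiv_r, Rel_inr_inr]
      exact hbi _ _ (hp ▸ hpt)
    · cases heq
  · -- inr s, inl q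
    cases hab
  · -- inr s, inr t
    rcases h with ⟨hne, ⟨hu, hv⟩ | ⟨hbid, hX, hu, hv⟩⟩ | ⟨heq, ⟨hu, hv⟩ | ⟨haX, hu, hv⟩⟩
    · rw [ns_r] at hu; rw [nt_lr] at hv; subst hu hv
      simp only [insEquiv_l_r, Rel_inr_inr]
      exact hab
    · rcases hX with hx | hx <;> cases hx
    · injection heq with heq
      rw [Subtype.mk.injEq] at heq; subst heq
      subst hu hv
      simp only [insEquiv_l_r, Rel_inr_inr]
      exact hab
    · cases haX

end SplitR
section SplitRB
variable {G : DiGraph.{u}} {S : Set G.V} {z : G.V}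

lemma splitR_bwd (hbi : ∀ a b : G.V, G.E a b → G.E b a) (hz : z ∉ S)
    (u v : ((RG G S).V ⊕ PUnit.{u+1}))
    (h : (RG G (insert z S)).E (insEquiv hz u) (insEquiv hz v)) :
    (splitOne (RG G S) (Sum.inl z)).E u v := by
  rcases u with (p | ⟨s, hs⟩) | ⟨⟩ <;> rcases v with (q | ⟨t, ht⟩) | ⟨⟩ <;>
    simp only [insEquiv_l_l, insEquiv_l_r, insEquiv_r, RG_E] at h
  · -- inl p → inl q
    obtain ⟨hpq, himp⟩ := h
    by_cases hpqeq : p = q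
    · subst hpqeq
      exact ⟨Sum.inl p, Sum.inl p, ⟨hpq, fun h' => h'⟩, Or.inr ⟨rfl, Or.inl ⟨rfl, rfl⟩⟩⟩
    · by_cases hq : q = z
      · subst hq
        have hpS : p ∈ S := (himp (Set.mem_insert _ _)).resolve_left hpqeq
        exact ⟨Sum.inl p, Sum.inl q, ⟨hpq, fun hzS => absurd hzS hz⟩,
          Or.inl ⟨fun hc => hpqeq (Sum.inl.inj hc),
            Or.inl ⟨(ns_ll hbi hz hpq).symm, (nt_ll_neg hz fun hc => hc.2 hpS).symm⟩⟩⟩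
      · by_cases hp : p = z
        · subst hp
          by_cases hqS : q ∈ S
          · -- adjoint of the edge (inl q, inl p)
            refine ⟨Sum.inl q, Sum.inl p, ⟨hbi _ _ hpq, fun h' => absurd h' hz⟩,
              Or.inl ⟨fun hc => hq (Sum.inl.inj hc),
                Or.inr ⟨?_, Or.inr rfl, (nt_ll_neg hz fun hc => hc.2 hqS).symm,
                  (ns_ll hbi hz (hbi _ _ hpq)).symm⟩⟩⟩
            rintro ⟨-, h'⟩
            exact hz (h' hqS)
          · exact ⟨Sum.inl p, Sum.inl q, ⟨hpq, fun h' => absurd h' hqS⟩,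
              Or.inl ⟨fun hc => hq (Sum.inl.inj hc).symm,
                Or.inl ⟨(ns_ll hbi hz hpq).symm, (nt_ll_neg hz fun hc => hq hc.1).symm⟩⟩⟩
        · have hqS : q ∈ S → p ∈ S := fun h' => (himp (Set.mem_insert_of_mem _ h')).resolve_left hp
          exact ⟨Sum.inl p, Sum.inl q, ⟨hpq, hqS⟩,
            Or.inl ⟨fun hc => hpqeq (Sum.inl.inj hc),
              Or.inl ⟨(ns_ll hbi hz hpq).symm, (nt_ll_neg hz fun hc => hq hc.1).symm⟩⟩⟩
  · -- inl p → inr t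
    obtain ⟨hpt, hpins⟩ := h
    have hp : p ≠ z := fun hc => hpins (Set.mem_insert_iff.2 (Or.inl hc))
    have hpS : p ∉ S := fun hc => hpins (Set.mem_insert_iff.2 (Or.inr hc))
    exact ⟨Sum.inl p, Sum.inr ⟨t, ht⟩, ⟨hpt, hpS⟩,
      Or.inl ⟨fun hc => (by cases hc),
        Or.inl ⟨(ns_lr_neg hp).symm, (nt_lr _).symm⟩⟩⟩
  · -- inl p → new vertex
    obtain ⟨hpz, hpins⟩ := h
    have hp : p ≠ z := fun hc => hpins (Set.mem_insert_iff.2 (Or.inl hc))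
    have hpS : p ∉ S := fun hc => hpins (Set.mem_insert_iff.2 (Or.inr hc))
    exact ⟨Sum.inl p, Sum.inl z, ⟨hpz, fun h' => absurd h' hz⟩,
      Or.inl ⟨fun hc => hp (Sum.inl.inj hc),
        Or.inl ⟨(ns_ll hbi hz hpz).symm, (nt_ll_pos hbi rfl hpS hpz).symm⟩⟩⟩
  · -- inr s → inl q : impossible
    exact h.elim
  · -- inr s → inr t
    by_cases hst : s = t
    · subst hst
      exact ⟨Sum.inr ⟨s, hs⟩, Sum.inr ⟨s, hs⟩, h, Or.inr ⟨rfl, Or.inl ⟨rfl, rfl⟩⟩⟩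
    · refine ⟨Sum.inr ⟨s, hs⟩, Sum.inr ⟨t, ht⟩, h,
        Or.inl ⟨fun hc => ?_, Or.inl ⟨(ns_r _).symm, (nt_lr _).symm⟩⟩⟩
      injection hc with hc
      exact hst (congrArg Subtype.val hc)
  · -- inr s → new vertex
    exact ⟨Sum.inl z, Sum.inr ⟨s, hs⟩, ⟨hbi _ _ h, hz⟩,
      Or.inl ⟨fun hc => (by cases hc),
        Or.inr ⟨fun hf => hf, Or.inl rfl, (nt_lr _).symm, (ns_lr_pos rfl).symm⟩⟩⟩
  · -- new vertex → inl q : impossible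
    exact h.elim
  · -- new vertex → inr t
    exact ⟨Sum.inl z, Sum.inr ⟨t, ht⟩, ⟨h, hz⟩,
      Or.inl ⟨fun hc => (by cases hc),
        Or.inl ⟨(ns_lr_pos rfl).symm, (nt_lr _).symm⟩⟩⟩
  · -- loop at the new vertex
    exact ⟨Sum.inl z, Sum.inl z, ⟨h, fun h' => h'⟩, Or.inr ⟨rfl, Or.inr ⟨rfl, rfl, rfl⟩⟩⟩

/-- the key step: splitting the replicated graph at a boundary vertex -/
noncomputable def splitRIso (hbi : ∀ a b : G.V, G.E a b → G.E b a) (hz : z ∉ S) :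
    Iso (splitOne (RG G S) (Sum.inl z)) (RG G (insert z S)) where
  toEquiv := insEquiv hz
  edge_iff := fun u v => ⟨splitR_fwd hbi hz u v, splitR_bwd hbi hz u v⟩

@[simp] lemma splitRIso_apply_inl (hbi : ∀ a b : G.V, G.E a b → G.E b a) (hz : z ∉ S)
    (a : G.V) : (splitRIso hbi hz).toEquiv (Sum.inl (Sum.inl a)) = Sum.inl a := rfl

end SplitRB
lemma extract_inl {α β : Type u} :
    ∀ (m : List (α ⊕ β)), (∀ v ∈ m, ∃ w, v = Sum.inl w) →
      ∃ m' : List α, m = m'.map Sum.inl := by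
  intro m
  induction m with
  | nil => exact fun _ => ⟨[], rfl⟩
  | cons v vs ih =>
      intro h
      obtain ⟨w, rfl⟩ := h v (List.mem_cons_self)
      obtain ⟨m', rfl⟩ := ih fun x hx => h x (List.mem_cons_of_mem _ hx)
      exact ⟨w :: m', rfl⟩

/-- Sequentially splitting the replicated graph at a list of fresh vertices. -/
lemma seqSplit_RG {G : DiGraph.{u}} (hbi : ∀ a b : G.V, G.E a b → G.E b a) :
    ∀ (l : List G.V) (S : Set G.V), (∀ w ∈ l, w ∉ S) → l.Nodup →
      Nonempty (Iso (seqSplit (RG G S) (l.map Sum.inl)) (RG G (S ∪ {w | w ∈ l}))) := by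
  intro l
  induction l with
  | nil =>
      intro S _ _
      rw [List.map_nil, seqSplit_nil]
      exact RG_congr (by simp)
  | cons z zs ih =>
      intro S hns hnd
      have hz : z ∉ S := hns z (List.mem_cons_self)
      rw [List.map_cons, seqSplit_cons]
      obtain ⟨i1⟩ := seqSplit_iso ((zs.map Sum.inl).map Sum.inl).length _ _
        (splitRIso hbi hz) ((zs.map Sum.inl).map Sum.inl) rfl
      have hmap : (((zs.map (Sum.inl : G.V → (RG G S).V)).map
          (Sum.inl : (RG G S).V → (splitOne (RG G S) (Sum.inl z)).V)).map (splitRIso hbi hz).toEquiv)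
          = zs.map (Sum.inl : G.V → (RG G (insert z S)).V) := by
        clear i1 ih hns hnd
        induction zs with
        | nil => rfl
        | cons a as ih' => exact congrArg (List.cons _) ih'
      replace i1 := hmap ▸ i1
      obtain ⟨i2⟩ := ih (insert z S)
        (by
          intro w hw
          rw [Set.mem_insert_iff]
          rintro (rfl | hwS)
          · exact (List.nodup_cons.1 hnd).1 hw
          · exact hns w (List.mem_cons_of_mem _ hw) hwS)
        (List.nodup_cons.1 hnd).2
      obtain ⟨i3⟩ := RG_congr (G := G)
        (show insert z S ∪ {w | w ∈ zs} = S ∪ {w | w ∈ z :: zs} by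
          ext x
          simp only [Set.mem_union, Set.mem_insert_iff, Set.mem_setOf_eq, List.mem_cons]
          tauto)
      exact ⟨(i1.trans i2).trans i3⟩

/-- A `Step` from any graph isomorphic to `RG G S` lands in `RG G (S ∪ bdry G S)`. -/
lemma step_iso {G : DiGraph.{u}} (hbi : ∀ a b : G.V, G.E a b → G.E b a) {S : Set G.V}
    {G' H : DiGraph.{u}} (i : Iso G' (RG G S)) (hs : Step G' H) :
    Nonempty (Iso H (RG G (S ∪ bdry G S))) := by
  obtain ⟨l, hnd, hmem, rfl⟩ := hs
  obtain ⟨i1⟩ := seqSplit_iso l.length G' (RG G S) i l rfl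
  have hform : ∀ v ∈ l.map i.toEquiv, ∃ w, v = Sum.inl w := by
    intro v hv
    rw [List.mem_map] at hv
    obtain ⟨x, hx, rfl⟩ := hv
    obtain ⟨w, hw, -⟩ := (hasFork_RG hbi S _).1 (hasFork_map i x ((hmem x).1 hx))
    exact ⟨w, hw⟩
  obtain ⟨l', hl'⟩ := extract_inl _ hform
  have hmem' : ∀ w, w ∈ l' ↔ w ∈ bdry G S := by
    intro w
    constructor
    · intro hw
      have : (Sum.inl w : (RG G S).V) ∈ l.map i.toEquiv := by
        rw [hl', List.mem_map]; exact ⟨w, hw, rfl⟩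
      rw [List.mem_map] at this
      obtain ⟨x, hx, hxw⟩ := this
      obtain ⟨w', hw', hbd⟩ := (hasFork_RG hbi S _).1 (hasFork_map i x ((hmem x).1 hx))
      rw [hxw] at hw'
      injection hw' with hw'
      rwa [hw']
    · intro hw
      have hf : G'.HasFork (i.toEquiv.symm (Sum.inl w)) := by
        rw [hasFork_iff_map i, i.toEquiv.apply_symm_apply]
        exact (hasFork_RG hbi S _).2 ⟨w, rfl, hw⟩
      have hx : i.toEquiv.symm (Sum.inl w) ∈ l := (hmem _).2 hf
      have : (Sum.inl w : (RG G S).V) ∈ l.map i.toEquiv := by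
        rw [List.mem_map]
        exact ⟨_, hx, i.toEquiv.apply_symm_apply _⟩
      rw [hl', List.mem_map] at this
      obtain ⟨x, hx', hxw⟩ := this
      injection hxw with hxw
      rwa [← hxw]
  rw [hl'] at i1
  have hnd' : l'.Nodup := by
    have := List.Nodup.map (i.toEquiv.injective) hnd
    rw [hl'] at this
    exact this.of_map _
  obtain ⟨i2⟩ := seqSplit_RG hbi l' S (fun w hw => ((hmem' w).1 hw).1) hnd'
  obtain ⟨i3⟩ := RG_congr (G := G)
    (show S ∪ {w | w ∈ l'} = S ∪ bdry G S by
      ext x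
      simp only [Set.mem_union, Set.mem_setOf_eq]
      rw [← hmem' x])
  exact ⟨(i1.trans i2).trans i3⟩

/-- Any finite graph admits a `Step`. -/
lemma step_exists {G' : DiGraph.{u}} (hfin : Finite G'.V) : ∃ H, Step G' H := by
  have hset : (setOf G'.HasFork).Finite := Set.toFinite _
  refine ⟨seqSplit G' hset.toFinset.toList, hset.toFinset.toList, Finset.nodup_toList _,
    fun x => ?_, rfl⟩
  simp only [Finset.mem_toList, Set.Finite.mem_toFinset, Set.mem_setOf_eq]
  exact Iff.rfl

lemma step_exists' (G : DiGraph.{u}) [Fintype G.V] (hbi : ∀ a b : G.V, G.E a b → G.E b a)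
    {S : Set G.V} {G' : DiGraph.{u}} (hne : Nonempty (Iso G' (RG G S))) :
    ∃ H, Step G' H ∧ Nonempty (Iso H (RG G (S ∪ bdry G S))) := by
  obtain ⟨i⟩ := hne
  have : Finite G'.V := Finite.of_equiv _ i.toEquiv.symm
  obtain ⟨H, hH⟩ := step_exists this
  exact ⟨H, hH, step_iso hbi i hH⟩

/-- the starting isomorphism -/
noncomputable def baseIso (G : DiGraph.{u}) (hbi : ∀ a b : G.V, G.E a b → G.E b a)
    (X₀ : G.V) : Iso (splitOne G X₀) (RG G (insert X₀ (∅ : Set G.V))) :=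
  (splitOneIso (isoRGEmpty G) X₀).trans (splitRIso hbi (Set.notMem_empty X₀))

/-- the evolving replicated region -/
def Sseq (G : DiGraph.{u}) (X₀ : G.V) : ℕ → Set G.V
  | 0 => insert X₀ ∅
  | t + 1 => Sseq G X₀ t ∪ bdry G (Sseq G X₀ t)

lemma X0_mem_Sseq (G : DiGraph.{u}) (X₀ : G.V) : ∀ t, X₀ ∈ Sseq G X₀ t
  | 0 => Set.mem_insert _ _
  | t + 1 => Set.mem_union_left _ (X0_mem_Sseq G X₀ t)

/-- the invariant: any legal trajectory tracks `RG G (Sseq …)` -/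
lemma gs_iso {G : DiGraph.{u}} (hbi : ∀ a b : G.V, G.E a b → G.E b a) (X₀ : G.V)
    (Gs : ℕ → DiGraph.{u}) (h0 : Gs 0 = splitOne G X₀)
    (hstep : ∀ t, Step (Gs t) (Gs (t + 1))) :
    ∀ t, Nonempty (Iso (Gs t) (RG G (Sseq G X₀ t)))
  | 0 => by rw [h0]; exact ⟨baseIso G hbi X₀⟩
  | t + 1 => by
      obtain ⟨i⟩ := gs_iso hbi X₀ Gs h0 hstep t
      exact step_iso hbi i (hstep t)

lemma bdry_nonempty {G : DiGraph.{u}} {S : Set G.V} {x : G.V} (hx : x ∈ S) :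
    ∀ b, Relation.ReflTransGen G.E x b → b ∉ S → ∃ w, w ∈ bdry G S := by
  intro b hpath
  induction hpath with
  | refl => exact fun h => absurd hx h
  | @tail c d hcd hEd ih =>
      intro hd
      by_cases hc : c ∈ S
      · exact ⟨d, hd, c, hc, hEd⟩
      · exact ih hc

/-- the fully replicated graph is two disjoint copies -/
noncomputable def isoRGUniv (G : DiGraph.{u}) : Iso (RG G Set.univ) (disjUnion G G) where
  toEquiv := Equiv.sumCongr (Equiv.refl G.V) (Equiv.Set.univ G.V)
  edge_iff := fun a b => by
    rcases a with a | s <;> rcases b with b | t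
    · change Rel G Set.univ (Sum.inl a) (Sum.inl b) ↔ (disjUnion G G).E (Sum.inl a) (Sum.inl b)
      simp [disjUnion, Rel]
    · change Rel G Set.univ (Sum.inl a) (Sum.inr t) ↔ (disjUnion G G).E (Sum.inl a) (Sum.inr t.1)
      simp [disjUnion, Rel]
    · change Rel G Set.univ (Sum.inr s) (Sum.inl b) ↔ (disjUnion G G).E (Sum.inr s.1) (Sum.inl b)
      simp [disjUnion, Rel]
    · change Rel G Set.univ (Sum.inr s) (Sum.inr t) ↔ (disjUnion G G).E (Sum.inr s.1) (Sum.inr t.1)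
      simp [disjUnion, Rel]

noncomputable def chain (G : DiGraph.{u}) [Fintype G.V]
    (hbi : ∀ a b : G.V, G.E a b → G.E b a) (X₀ : G.V) :
    ℕ → {p : DiGraph.{u} × Set G.V // Nonempty (Iso p.1 (RG G p.2))}
  | 0 => ⟨(splitOne G X₀, insert X₀ ∅), ⟨baseIso G hbi X₀⟩⟩
  | t + 1 =>
      ⟨((step_exists' G hbi (chain G hbi X₀ t).2).choose,
        (chain G hbi X₀ t).1.2 ∪ bdry G (chain G hbi X₀ t).1.2),
        (step_exists' G hbi (chain G hbi X₀ t).2).choose_spec.2⟩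

lemma chain_step (G : DiGraph.{u}) [Fintype G.V]
    (hbi : ∀ a b : G.V, G.E a b → G.E b a) (X₀ : G.V) (t : ℕ) :
    Step (chain G hbi X₀ t).1.1 (chain G hbi X₀ (t + 1)).1.1 :=
  (step_exists' G hbi (chain G hbi X₀ t).2).choose_spec.1

/-- **Universal copy constructor.** Let `G` be a finite connected directed graph in
which every edge is bidirectional, and let `X₀` be a vertex of `G`. Form `G₀` by
applying the splitFork action at `X₀`, and for `t ≥ 1` obtain `G_t` from `G_{t-1}` by
applying the splitFork action at every vertex carrying a fork. Then every `G_t` is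
well defined — such a sequence exists and the applications of the splitFork action at
the distinct fork-carrying vertices are compatible (any two orders give isomorphic
results) — the sequence is eventually constant (up to isomorphism), and the eventual
graph is the disjoint union of two connected directed graphs, each of which is
isomorphic to `G`. -/
theorem universal_copy_constructor (G : DiGraph.{u}) [Fintype G.V]
    (hconn : ∀ a b : G.V, Relation.ReflTransGen G.E a b)
    (hbi : ∀ a b : G.V, G.E a b → G.E b a) (X₀ : G.V) :
    (∃ Gs : ℕ → DiGraph.{u}, Gs 0 = splitOne G X₀ ∧ ∀ t, Step (Gs t) (Gs (t + 1))) ∧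
    ∀ Gs : ℕ → DiGraph.{u}, Gs 0 = splitOne G X₀ → (∀ t, Step (Gs t) (Gs (t + 1))) →
      (∀ (t : ℕ) (H₁ H₂ : DiGraph.{u}), Step (Gs t) H₁ → Step (Gs t) H₂ →
        Nonempty (Iso H₁ H₂)) ∧
      ∃ T : ℕ, (∀ t, T ≤ t → Nonempty (Iso (Gs t) (Gs T))) ∧
        Nonempty (Iso (Gs T) (disjUnion G G)) := by
  refine ⟨⟨fun t => (chain G hbi X₀ t).1.1, rfl, fun t => chain_step G hbi X₀ t⟩, ?_⟩
  intro Gs h0 hstep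
  have hiso := gs_iso hbi X₀ Gs h0 hstep
  constructor
  · intro t H₁ H₂ h1 h2
    obtain ⟨i⟩ := hiso t
    obtain ⟨j1⟩ := step_iso hbi i h1
    obtain ⟨j2⟩ := step_iso hbi i h2
    exact ⟨j1.trans j2.symm⟩
  · have hcard : ∀ t, Sseq G X₀ t = Set.univ ∨ t + 1 ≤ (Sseq G X₀ t).ncard := by
      intro t
      induction t with
      | zero =>
          right
          rw [show Sseq G X₀ 0 = {X₀} by simp [Sseq]]
          simp [Set.ncard_singleton]
      | succ t ih =>
          by_cases huniv : Sseq G X₀ t = Set.univ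
          · left
            show Sseq G X₀ t ∪ _ = _
            rw [huniv]
            exact Set.univ_union _
          · right
            obtain ⟨b, hb⟩ := (Set.ne_univ_iff_exists_notMem _).1 huniv
            obtain ⟨w, hw⟩ := bdry_nonempty (X0_mem_Sseq G X₀ t) b (hconn X₀ b) hb
            have hlt : Sseq G X₀ t ⊂ Sseq G X₀ (t + 1) := by
              constructor
              · exact Set.subset_union_left
              · intro hsub
                exact hw.1 (hsub (Set.mem_union_right _ hw))
            have hn := Set.ncard_lt_ncard hlt (Set.toFinite _)
            rcases ih with h | h
            · exact absurd h huniv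
            · omega
    set T := Fintype.card G.V with hT
    have hTuniv : Sseq G X₀ T = Set.univ := by
      rcases hcard T with h | h
      · exact h
      · exfalso
        have h2 : (Sseq G X₀ T).ncard ≤ T := by
          have := Set.ncard_le_ncard (Set.subset_univ (Sseq G X₀ T)) (Set.toFinite _)
          rwa [Set.ncard_univ, Nat.card_eq_fintype_card] at this
        omega
    have hstays : ∀ t, T ≤ t → Sseq G X₀ t = Set.univ := by
      intro t ht
      induction t, ht using Nat.le_induction with
      | base => exact hTuniv
      | succ t ht ih =>
          show Sseq G X₀ t ∪ _ = _
          rw [ih]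
          exact Set.univ_union _
    refine ⟨T, fun t ht => ?_, ?_⟩
    · obtain ⟨i⟩ := hiso t
      obtain ⟨j⟩ := hiso T
      obtain ⟨k⟩ := RG_congr (G := G)
        (show Sseq G X₀ t = Sseq G X₀ T by rw [hstays t ht, hTuniv])
      exact ⟨(i.trans k).trans j.symm⟩
    · obtain ⟨j⟩ := hiso T
      obtain ⟨k⟩ := RG_congr (G := G) hTuniv
      exact ⟨(j.trans k).trans (isoRGUniv G)⟩


end SplitFork
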